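/- Let N ∈ ℕ, let h_0 > h_1 > ... > h_N be distinct real numbers, and for a ∈ ℝ define T_N^{Lag}[a](x) = Σ_{ν=0}^N (Π_{ν'≠ν} (a − h_{ν'})/(h_ν − h_{ν'}))·exp(i·h_ν·x). If all |h_ν| ≤ 1 and |a| ≤ M with M ≥ 1, then for all x ∈ ℝ, |exp(iax) − T_N^{Lag}[a](x)| ≤ ((|a|+1)·|x|)^{N+1}/(N+1)!. -/

import Mathlib

open Finset Polynomial

lemma zeroSum {F : Type*} [Field F] (n : ℕ) (hn : 1 ≤ n) (v : ℕ → F)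
    (hv : Set.InjOn v (Finset.range (n+1))) :
    ∑ ν ∈ Finset.range (n+1), (∏ μ ∈ (Finset.range (n+1)).erase ν, (v ν - v μ))⁻¹ = 0 := by
  have hs : (Finset.range (n+1)).Nonempty := nonempty_range_add_one
  have hsum := Lagrange.sum_basis hv hs
  have hco := congrArg (fun p => Polynomial.coeff p n) hsum
  simp only [Polynomial.finset_sum_coeff] at hco
  have hcb : ∀ ν ∈ Finset.range (n+1),
      (Lagrange.basis (Finset.range (n+1)) v ν).coeff n
        = (∏ μ ∈ (Finset.range (n+1)).erase ν, (v ν - v μ))⁻¹ := by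
    intro ν hν
    rw [Lagrange.basis]
    have : ∀ μ ∈ (Finset.range (n+1)).erase ν,
        Lagrange.basisDivisor (v ν) (v μ) = C (v ν - v μ)⁻¹ * (X - C (v μ)) := fun _ _ => rfl
    rw [Finset.prod_congr rfl this, Finset.prod_mul_distrib, ← map_prod]
    rw [Polynomial.coeff_C_mul]
    have hmon : (∏ μ ∈ (Finset.range (n+1)).erase ν, (X - C (v μ))).Monic :=
      monic_prod_of_monic _ _ fun μ _ => monic_X_sub_C _
    have hdeg : (∏ μ ∈ (Finset.range (n+1)).erase ν, (X - C (v μ))).natDegree = n := by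
      rw [natDegree_prod_of_monic _ _ fun μ _ => monic_X_sub_C _]
      simp [Finset.card_erase_of_mem hν, Finset.mem_range.mp hν, natDegree_X_sub_C]
    have h1 := hmon.coeff_natDegree
    rw [hdeg] at h1
    rw [h1, mul_one, ← Finset.prod_inv_distrib]
  rw [Finset.sum_congr rfl hcb] at hco
  rw [hco, Polynomial.coeff_one, if_neg (Nat.one_le_iff_ne_zero.mp hn)]

lemma intExp (c d : ℂ) :
    ∫ s in (0:ℝ)..1, Complex.exp (c + s * d) * d = Complex.exp (c + d) - Complex.exp c := by
  have hderiv : ∀ t ∈ Set.uIcc (0:ℝ) 1,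
      HasDerivAt (fun s : ℝ => Complex.exp (c + s * d)) (Complex.exp (c + t * d) * d) t := by
    intro t _
    have h1 : HasDerivAt (fun s : ℝ => c + (s : ℂ) * d) d t := by
      have := (Complex.ofRealCLM.hasDerivAt (x := t)).mul_const d
      simpa using this.const_add c
    simpa using h1.cexp
  have hcont : ContinuousOn (fun t : ℝ => Complex.exp (c + t * d) * d) (Set.uIcc (0:ℝ) 1) := by
    fun_prop
  have := intervalIntegral.integral_eq_sub_of_hasDerivAt hderiv (hcont.intervalIntegrable)
  simpa using this

lemma recId (k : ℕ) (y : ℕ → ℝ) (hy : Set.InjOn y (Finset.range (k+2)))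
    (C : ℂ) (β : ℝ) :
    ∑ ν ∈ Finset.range (k+2), C * Complex.exp (Complex.I * β * y ν) /
        ∏ μ ∈ (Finset.range (k+2)).erase ν, ((y ν : ℂ) - (y μ : ℂ))
    = ∫ s in (0:ℝ)..1, ∑ ν ∈ Finset.range (k+1),
        (C * Complex.I * β * Complex.exp (Complex.I * ((1 - s) * β : ℝ) * (y (k+1) : ℝ))) *
          Complex.exp (Complex.I * ((β * s : ℝ)) * y ν) /
        ∏ μ ∈ (Finset.range (k+1)).erase ν, ((y ν : ℂ) - (y μ : ℂ)) := by
  -- notation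
  set D : ℕ → ℂ := fun ν => ∏ μ ∈ (Finset.range (k+1)).erase ν, ((y ν : ℂ) - (y μ : ℂ)) with hD
  have hyne : ∀ i ∈ Finset.range (k+2), ∀ j ∈ Finset.range (k+2), i ≠ j →
      ((y i : ℂ) - (y j : ℂ)) ≠ 0 := by
    intro i hi j hj hij
    have : y i ≠ y j := fun hc => hij (hy (Finset.mem_coe.mpr hi) (Finset.mem_coe.mpr hj) hc)
    rw [sub_ne_zero]
    exact_mod_cast this
  have hw : ∀ ν ∈ Finset.range (k+1), ((y ν : ℂ) - (y (k+1) : ℂ)) ≠ 0 := by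
    intro ν hν
    have hν' := Finset.mem_range.mp hν
    exact hyne ν (Finset.mem_range.mpr (by omega)) (k+1) (Finset.mem_range.mpr (by omega))
      (by omega)
  have hDne : ∀ ν ∈ Finset.range (k+1), D ν ≠ 0 := by
    intro ν hν
    have hν' := Finset.mem_range.mp hν
    refine Finset.prod_ne_zero_iff.mpr fun μ hμ => ?_
    have hμ' := Finset.mem_erase.mp hμ
    have hμ'' := Finset.mem_range.mp hμ'.2
    exact hyne ν (Finset.mem_range.mpr (by omega)) μ (Finset.mem_range.mpr (by omega)) hμ'.1.symm
  -- integrability of each term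
  have hint : ∀ ν ∈ Finset.range (k+1), IntervalIntegrable (fun s : ℝ =>
      (C * Complex.I * β * Complex.exp (Complex.I * ((1 - s) * β : ℝ) * (y (k+1) : ℝ))) *
        Complex.exp (Complex.I * ((β * s : ℝ)) * y ν) / D ν)
      MeasureTheory.volume 0 1 := by
    intro ν _
    apply Continuous.intervalIntegrable
    fun_prop
  rw [intervalIntegral.integral_finset_sum hint]
  -- compute each integral
  have hterm : ∀ ν ∈ Finset.range (k+1),
      (∫ s in (0:ℝ)..1,
        (C * Complex.I * β * Complex.exp (Complex.I * ((1 - s) * β : ℝ) * (y (k+1) : ℝ))) *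
          Complex.exp (Complex.I * ((β * s : ℝ)) * y ν) / D ν)
      = C * (Complex.exp (Complex.I * β * y ν) - Complex.exp (Complex.I * β * y (k+1))) /
          (((y ν : ℂ) - (y (k+1) : ℂ)) * D ν) := by
    intro ν hν
    have hwν := hw ν hν
    have hDν := hDne ν hν
    set c : ℂ := Complex.I * β * y (k+1) with hc
    set d : ℂ := Complex.I * β * ((y ν : ℂ) - (y (k+1) : ℂ)) with hd
    have hfun : ∀ s : ℝ,
        (C * Complex.I * β * Complex.exp (Complex.I * ((1 - s) * β : ℝ) * (y (k+1) : ℝ))) *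
          Complex.exp (Complex.I * ((β * s : ℝ)) * y ν) / D ν
        = (C / (((y ν : ℂ) - (y (k+1) : ℂ)) * D ν)) * (Complex.exp (c + s * d) * d) := by
      intro s
      rw [mul_assoc, ← Complex.exp_add]
      have hAB : Complex.I * ((1 - s) * β : ℝ) * (y (k+1) : ℝ) +
          Complex.I * ((β * s : ℝ)) * y ν = c + s * d := by
        rw [hc, hd]; push_cast; ring
      rw [hAB, hd]
      field_simp
    simp only [hfun]
    rw [intervalIntegral.integral_const_mul, intExp]
    have h1 : c + d = Complex.I * β * y ν := by rw [hc, hd]; ring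
    rw [h1, hc]
    ring
  rw [Finset.sum_congr rfl hterm]
  -- now the algebraic identity via zeroSum
  have hzs := zeroSum (k+1) (by omega) (fun ν => (y ν : ℂ))
    (fun i hi j hj hij => hy hi hj (Complex.ofReal_inj.mp hij))
  have hE : ∀ ν ∈ Finset.range (k+1),
      (∏ μ ∈ (Finset.range (k+2)).erase ν, ((y ν : ℂ) - (y μ : ℂ)))
        = ((y ν : ℂ) - (y (k+1) : ℂ)) * D ν := by
    intro ν hν
    have hνk : ν ≠ k + 1 := by have := Finset.mem_range.mp hν; omega
    have hset : (Finset.range (k+2)).erase ν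
        = insert (k+1) ((Finset.range (k+1)).erase ν) := by
      rw [Finset.range_add_one, Finset.erase_insert_of_ne hνk.symm]
    rw [hset, Finset.prod_insert (by simp)]
  have hEtop : (∏ μ ∈ (Finset.range (k+2)).erase (k+1), ((y (k+1) : ℂ) - (y μ : ℂ)))
      = D (k+1) := by
    rw [hD]
    simp only []
    rw [Finset.range_add_one, Finset.erase_insert (by simp), Finset.erase_eq_self.mpr (by simp)]
  rw [Finset.sum_range_succ, hEtop]
  rw [Finset.sum_congr rfl (fun ν hν => by rw [hE ν hν])]
  -- reduce to zero-sum
  have hsplit : ∀ ν ∈ Finset.range (k+1),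
      C * (Complex.exp (Complex.I * β * y ν) - Complex.exp (Complex.I * β * y (k+1))) /
          (((y ν : ℂ) - (y (k+1) : ℂ)) * D ν)
      = C * Complex.exp (Complex.I * β * y ν) / (((y ν : ℂ) - (y (k+1) : ℂ)) * D ν)
        - C * Complex.exp (Complex.I * β * y (k+1)) *
            ((((y ν : ℂ) - (y (k+1) : ℂ)) * D ν))⁻¹ := by
    intro ν hν; ring
  rw [Finset.sum_congr rfl hsplit, Finset.sum_sub_distrib, ← Finset.mul_sum]
  have hzsum : ∑ ν ∈ Finset.range (k+1), ((((y ν : ℂ) - (y (k+1) : ℂ)) * D ν))⁻¹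
      = - (D (k+1))⁻¹ := by
    have := hzs
    rw [Finset.sum_range_succ, hEtop] at this
    rw [Finset.sum_congr rfl (fun ν hν => by rw [hE ν hν])] at this
    linear_combination this
  rw [hzsum]
  ring

lemma absExpI (r t : ℝ) : ‖Complex.exp (Complex.I * r * t)‖ = 1 := by
  have h : Complex.I * (r:ℂ) * (t:ℂ) = ((r*t : ℝ) : ℂ) * Complex.I := by push_cast; ring
  rw [h, Complex.norm_exp_ofReal_mul_I]

lemma key : ∀ (k : ℕ) (y : ℕ → ℝ), Set.InjOn y (Finset.range (k+1)) → ∀ (C : ℂ) (β : ℝ),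
    ‖∑ ν ∈ Finset.range (k+1), C * Complex.exp (Complex.I * β * y ν) /
        ∏ μ ∈ (Finset.range (k+1)).erase ν, ((y ν : ℂ) - (y μ : ℂ))‖
      ≤ ‖C‖ * |β| ^ k / k.factorial := by
  intro k
  induction k with
  | zero =>
    intro y hy C β
    simp [Finset.sum_range_one, absExpI, map_mul]
  | succ k IH =>
    intro y hy C β
    rw [recId k y hy C β]
    have hy' : Set.InjOn y (Finset.range (k+1)) :=
      hy.mono (Finset.coe_subset.mpr (Finset.range_subset_range.mpr (by omega)))
    have habsC' : ∀ s : ℝ, ‖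
        (C * Complex.I * β * Complex.exp (Complex.I * ((1 - s) * β : ℝ) * (y (k+1) : ℝ)))‖
        = ‖C‖ * |β| := by
      intro s
      rw [norm_mul, norm_mul, norm_mul, absExpI]
      simp [Complex.norm_I]
    have hpt : ∀ s ∈ Set.Icc (0:ℝ) 1,
        ‖∑ ν ∈ Finset.range (k+1),
          (C * Complex.I * β * Complex.exp (Complex.I * ((1 - s) * β : ℝ) * (y (k+1) : ℝ))) *
            Complex.exp (Complex.I * ((β * s : ℝ)) * y ν) /
          ∏ μ ∈ (Finset.range (k+1)).erase ν, ((y ν : ℂ) - (y μ : ℂ))‖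
        ≤ (‖C‖ * |β| ^ (k+1) / k.factorial) * s ^ k := by
      intro s hs
      refine le_trans (IH y hy'
        (C * Complex.I * β * Complex.exp (Complex.I * ((1 - s) * β : ℝ) * (y (k+1) : ℝ)))
        (β * s)) ?_
      rw [habsC', abs_mul, abs_of_nonneg hs.1, mul_pow]
      apply le_of_eq
      ring
    have hGcont : Continuous (fun s : ℝ =>
        ∑ ν ∈ Finset.range (k+1),
          (C * Complex.I * β * Complex.exp (Complex.I * ((1 - s) * β : ℝ) * (y (k+1) : ℝ))) *
            Complex.exp (Complex.I * ((β * s : ℝ)) * y ν) /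
          ∏ μ ∈ (Finset.range (k+1)).erase ν, ((y ν : ℂ) - (y μ : ℂ))) := by
      apply continuous_finset_sum
      intro ν _
      fun_prop
    calc ‖∫ s in (0:ℝ)..1, ∑ ν ∈ Finset.range (k+1),
          (C * Complex.I * β * Complex.exp (Complex.I * ((1 - s) * β : ℝ) * (y (k+1) : ℝ))) *
            Complex.exp (Complex.I * ((β * s : ℝ)) * y ν) /
          ∏ μ ∈ (Finset.range (k+1)).erase ν, ((y ν : ℂ) - (y μ : ℂ))‖
        ≤ ∫ s in (0:ℝ)..1, ‖∑ ν ∈ Finset.range (k+1),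
          (C * Complex.I * β * Complex.exp (Complex.I * ((1 - s) * β : ℝ) * (y (k+1) : ℝ))) *
            Complex.exp (Complex.I * ((β * s : ℝ)) * y ν) /
          ∏ μ ∈ (Finset.range (k+1)).erase ν, ((y ν : ℂ) - (y μ : ℂ))‖ := by
          exact intervalIntegral.norm_integral_le_integral_norm (by norm_num)
      _ ≤ ∫ s in (0:ℝ)..1, (‖C‖ * |β| ^ (k+1) / k.factorial) * s ^ k := by
          apply intervalIntegral.integral_mono_on (by norm_num)
          · exact (hGcont.norm).intervalIntegrable 0 1
          · exact (by fun_prop : Continuous fun s : ℝ =>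
              (‖C‖ * |β| ^ (k+1) / k.factorial) * s ^ k).intervalIntegrable 0 1
          · exact hpt
      _ = ‖C‖ * |β| ^ (k+1) / (k+1).factorial := by
          rw [intervalIntegral.integral_const_mul, integral_pow]
          rw [Nat.factorial_succ]
          push_cast
          have : (k.factorial : ℝ) ≠ 0 := Nat.cast_ne_zero.mpr k.factorial_ne_zero
          field_simp
          ring_nf

theorem stmt4 (N : ℕ) (h : ℕ → ℝ)
    (hdec : ∀ i j, i < j → j ≤ N → h j < h i)
    (hbd : ∀ ν ≤ N, |h ν| ≤ 1)
    (a M : ℝ) (hM : 1 ≤ M) (ha : |a| ≤ M) (x : ℝ) :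
    ‖Complex.exp (Complex.I * (a : ℂ) * (x : ℂ)) -
        ∑ ν ∈ Finset.range (N + 1),
          (∏ ν' ∈ (Finset.range (N + 1)).erase ν, (((a - h ν') / (h ν - h ν') : ℝ) : ℂ)) *
            Complex.exp (Complex.I * (h ν : ℂ) * (x : ℂ))‖ ≤
      ((|a| + 1) * |x|) ^ (N + 1) / (N + 1).factorial := by
  have hhdiff : ∀ ν μ, ν ≤ N → μ ≤ N → ν ≠ μ → h ν ≠ h μ := by
    intro ν μ hν hμ hne
    rcases lt_or_gt_of_ne hne with hlt | hgt
    · exact ne_of_gt (hdec ν μ hlt hμ)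
    · exact ne_of_lt (hdec μ ν hgt hν)
  by_cases hcase : ∀ ν ≤ N, a ≠ h ν
  · -- main case : a distinct from all nodes
    set y : ℕ → ℝ := fun ν => if ν ≤ N then h ν else a with hy
    have hInj : Set.InjOn y (Finset.range (N+2)) := by
      intro i hi j hj hij
      simp only [Finset.coe_range, Set.mem_Iio] at hi hj
      by_contra hne
      rcases le_or_gt i N with hiN | hiN <;> rcases le_or_gt j N with hjN | hjN
      · simp only [hy, if_pos hiN, if_pos hjN] at hij
        exact hhdiff i j hiN hjN hne hij
      · simp only [hy, if_pos hiN, if_neg (by omega : ¬ j ≤ N)] at hij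
        exact hcase i hiN hij.symm
      · simp only [hy, if_neg (by omega : ¬ i ≤ N), if_pos hjN] at hij
        exact hcase j hjN hij
      · omega
    have hkey := key (N+1) y hInj 1 x
    set ω : ℂ := ∏ ν ∈ Finset.range (N+1), ((a:ℂ) - (h ν:ℂ)) with hω
    have hane : ∀ ν ∈ Finset.range (N+1), ((a:ℂ) - (h ν:ℂ)) ≠ 0 := by
      intro ν hν
      rw [sub_ne_zero]
      exact_mod_cast hcase ν (by have := Finset.mem_range.mp hν; omega)
    have hωne : ω ≠ 0 := Finset.prod_ne_zero_iff.mpr hane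
    set D : ℕ → ℂ := fun ν => ∏ μ ∈ (Finset.range (N+1)).erase ν, ((h ν:ℂ) - (h μ:ℂ)) with hDdef
    have hDne : ∀ ν ∈ Finset.range (N+1), D ν ≠ 0 := by
      intro ν hν
      refine Finset.prod_ne_zero_iff.mpr fun μ hμ => ?_
      have hμ' := Finset.mem_erase.mp hμ
      rw [sub_ne_zero]
      exact_mod_cast hhdiff ν μ (by have := Finset.mem_range.mp hν; omega)
        (by have := Finset.mem_range.mp hμ'.2; omega) (Ne.symm hμ'.1)
    -- the error factorization
    have hEν : ∀ ν ∈ Finset.range (N+1),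
        (∏ μ ∈ (Finset.range (N+2)).erase ν, ((y ν : ℂ) - (y μ : ℂ)))
          = ((h ν:ℂ) - (a:ℂ)) * D ν := by
      intro ν hν
      have hνN : ν ≤ N := by have := Finset.mem_range.mp hν; omega
      have hset : (Finset.range (N+2)).erase ν
          = insert (N+1) ((Finset.range (N+1)).erase ν) := by
        rw [Finset.range_add_one, Finset.erase_insert_of_ne (by omega : ν ≠ N+1).symm]
      rw [hset, Finset.prod_insert (by simp)]
      have h1 : y ν = h ν := by simp [hy, hνN]
      have h2 : y (N+1) = a := by simp [hy]
      rw [h1, h2]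
      congr 1
      apply Finset.prod_congr rfl
      intro μ hμ
      have : μ ≤ N := by have := Finset.mem_range.mp (Finset.mem_erase.mp hμ).2; omega
      simp [hy, this]
    have hEtop : (∏ μ ∈ (Finset.range (N+2)).erase (N+1), ((y (N+1) : ℂ) - (y μ : ℂ))) = ω := by
      rw [Finset.range_add_one, Finset.erase_insert (by simp)]
      rw [hω]
      apply Finset.prod_congr rfl
      intro μ hμ
      have hμN : μ ≤ N := by have := Finset.mem_range.mp hμ; omega
      simp [hy, hμN]
    have hfact : Complex.exp (Complex.I * (a : ℂ) * (x : ℂ)) -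
        ∑ ν ∈ Finset.range (N + 1),
          (∏ ν' ∈ (Finset.range (N + 1)).erase ν, (((a - h ν') / (h ν - h ν') : ℝ) : ℂ)) *
            Complex.exp (Complex.I * (h ν : ℂ) * (x : ℂ))
        = ω * ∑ ν ∈ Finset.range (N+2), 1 * Complex.exp (Complex.I * x * y ν) /
            ∏ μ ∈ (Finset.range (N+2)).erase ν, ((y ν : ℂ) - (y μ : ℂ)) := by
      conv_rhs => rw [Finset.sum_range_succ]
      rw [mul_add, Finset.mul_sum, hEtop]
      have h2 : y (N+1) = a := by simp [hy]
      rw [h2]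
      have htop : ω * (1 * Complex.exp (Complex.I * x * a) / ω)
          = Complex.exp (Complex.I * (a:ℂ) * (x:ℂ)) := by
        rw [one_mul, mul_div_assoc']
        rw [mul_comm ω _, mul_div_assoc, div_self hωne, mul_one]
        congr 1
        ring
      rw [htop]
      have hterms : ∀ ν ∈ Finset.range (N+1),
          ω * (1 * Complex.exp (Complex.I * x * y ν) /
            ∏ μ ∈ (Finset.range (N+2)).erase ν, ((y ν : ℂ) - (y μ : ℂ)))
          = -((∏ ν' ∈ (Finset.range (N + 1)).erase ν, (((a - h ν') / (h ν - h ν') : ℝ) : ℂ)) *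
              Complex.exp (Complex.I * (h ν : ℂ) * (x : ℂ))) := by
        intro ν hν
        have hνN : ν ≤ N := by have := Finset.mem_range.mp hν; omega
        rw [hEν ν hν]
        have h1 : y ν = h ν := by simp [hy, hνN]
        rw [h1]
        have hprod : (∏ ν' ∈ (Finset.range (N + 1)).erase ν, (((a - h ν') / (h ν - h ν') : ℝ) : ℂ))
            = (∏ ν' ∈ (Finset.range (N+1)).erase ν, ((a:ℂ) - (h ν':ℂ))) / D ν := by
          rw [hDdef]
          rw [← Finset.prod_div_distrib]
          apply Finset.prod_congr rfl
          intro μ _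
          push_cast
          ring
        rw [hprod]
        have hωsplit : ω = ((a:ℂ) - (h ν:ℂ)) *
            ∏ ν' ∈ (Finset.range (N+1)).erase ν, ((a:ℂ) - (h ν':ℂ)) :=
          (Finset.mul_prod_erase (Finset.range (N+1)) _ hν).symm
        rw [hωsplit]
        have hcomm : Complex.exp (Complex.I * (x:ℂ) * (h ν:ℂ))
            = Complex.exp (Complex.I * (h ν:ℂ) * (x:ℂ)) := by congr 1; ring
        rw [hcomm]
        have hd1 : ((h ν:ℂ) - (a:ℂ)) ≠ 0 := by
          rw [sub_ne_zero]
          exact_mod_cast (hcase ν hνN).symm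
        field_simp [hd1, hDne ν hν]
        ring
      rw [Finset.sum_congr rfl hterms]
      rw [Finset.sum_neg_distrib]
      ring
    rw [hfact, norm_mul]
    have habsω : ‖ω‖ = ∏ ν ∈ Finset.range (N+1), |a - h ν| := by
      rw [hω, norm_prod]
      apply Finset.prod_congr rfl
      intro ν _
      rw [← Complex.ofReal_sub, Complex.norm_real, Real.norm_eq_abs]
    have hωbd : ‖ω‖ ≤ (|a| + 1) ^ (N+1) := by
      rw [habsω]
      calc ∏ ν ∈ Finset.range (N+1), |a - h ν|
          ≤ ∏ ν ∈ Finset.range (N+1), (|a| + 1) := by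
            apply Finset.prod_le_prod (fun ν _ => abs_nonneg _)
            intro ν hν
            have hνN : ν ≤ N := by have := Finset.mem_range.mp hν; omega
            calc |a - h ν| ≤ |a| + |h ν| := abs_sub _ _
              _ ≤ |a| + 1 := by linarith [hbd ν hνN]
        _ = (|a| + 1) ^ (N+1) := by rw [Finset.prod_const, Finset.card_range]
    rw [norm_one, one_mul] at hkey
    calc ‖ω‖ * ‖∑ ν ∈ Finset.range (N+2),
          1 * Complex.exp (Complex.I * x * y ν) /
            ∏ μ ∈ (Finset.range (N+2)).erase ν, ((y ν : ℂ) - (y μ : ℂ))‖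
        ≤ (|a| + 1) ^ (N+1) * (|x| ^ (N+1) / (N+1).factorial) := by
          apply mul_le_mul hωbd hkey (norm_nonneg _)
          positivity
      _ = ((|a| + 1) * |x|) ^ (N + 1) / (N + 1).factorial := by
          rw [mul_pow]
          ring
  · -- a equals one of the nodes
    push_neg at hcase
    obtain ⟨ν0, hν0N, hν0⟩ := hcase
    have hsum : (∑ ν ∈ Finset.range (N + 1),
          (∏ ν' ∈ (Finset.range (N + 1)).erase ν, (((a - h ν') / (h ν - h ν') : ℝ) : ℂ)) *
            Complex.exp (Complex.I * (h ν : ℂ) * (x : ℂ)))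
        = Complex.exp (Complex.I * (a : ℂ) * (x : ℂ)) := by
      rw [Finset.sum_eq_single ν0]
      · have : ∀ ν' ∈ (Finset.range (N+1)).erase ν0,
            (((a - h ν') / (h ν0 - h ν') : ℝ) : ℂ) = 1 := by
          intro ν' hν'
          have hν'' := Finset.mem_erase.mp hν'
          have hν'N : ν' ≤ N := by have := Finset.mem_range.mp hν''.2; omega
          rw [hν0]
          rw [div_self (sub_ne_zero.mpr (hhdiff ν0 ν' hν0N hν'N (Ne.symm hν''.1)))]
          norm_num
        rw [Finset.prod_congr rfl this, Finset.prod_const_one, one_mul, hν0]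
      · intro ν hν hne
        have hνN : ν ≤ N := by have := Finset.mem_range.mp hν; omega
        have hmem : ν0 ∈ (Finset.range (N+1)).erase ν :=
          Finset.mem_erase.mpr ⟨Ne.symm hne, Finset.mem_range.mpr (by omega)⟩
        rw [Finset.prod_eq_zero hmem, zero_mul]
        rw [hν0, sub_self, zero_div, Complex.ofReal_zero]
      · intro hcontra
        exact absurd (Finset.mem_range.mpr (by omega)) hcontra
    rw [hsum, sub_self, norm_zero]
    positivity
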